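/- arXiv:2010.05420 — 2 statements merged into one kernel-verified Lean document; each statement's English description precedes it below -/
import Mathlib

section
/- (GMMH* is $\frac{1}{p}$-A$\triangle$U.) Let $n > 1$ with smallest prime divisor $p$, and let $k \geq 1$. For the family of hash functions $h_{\mathbf{x}} : \mathbb{Z}_n^k \to \mathbb{Z}_n$, $h_{\mathbf{x}}(\mathbf{m}) = \sum_{i=1}^k m_i x_i$ (arithmetic in $\mathbb{Z}_n$), indexed by keys $\mathbf{x} \in \mathbb{Z}_n^k$: for any two distinct messages $\mathbf{m}, \mathbf{m}' \in \mathbb{Z}_n^k$ and any $b \in \mathbb{Z}_n$, the number of keys $\mathbf{x} \in \mathbb{Z}_n^k$ with $h_{\mathbf{x}}(\mathbf{m}) - h_{\mathbf{x}}(\mathbf{m}') = b$ is at most $n^k / p$. -/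
theorem stmt_8 (n : ℕ) (hn : 1 < n) (k : ℕ) (hk : 1 ≤ k)
    (m m' : Fin k → ZMod n) (hmm : m ≠ m') (b : ZMod n) :
    Nat.card {x : Fin k → ZMod n //
      (∑ i, m i * x i) - (∑ i, m' i * x i) = b} ≤ n ^ k / n.minFac := by
  haveI : NeZero n := ⟨by omega⟩
  set d : Fin k → ZMod n := fun i => m i - m' i with hd
  have hd0 : d ≠ 0 := by
    intro h
    apply hmm
    funext i
    have := congrFun h i
    simpa [hd, sub_eq_zero] using this
  obtain ⟨j, hj⟩ := Function.ne_iff.mp hd0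
  let φ : (Fin k → ZMod n) →+ ZMod n :=
    { toFun := fun x => ∑ i, d i * x i,
      map_zero' := by simp,
      map_add' := by intro x y; simp [mul_add, Finset.sum_add_distrib] }
  have hpred : ∀ x : Fin k → ZMod n,
      ((∑ i, m i * x i) - (∑ i, m' i * x i) = b) ↔ φ x = b := by
    intro x
    simp [φ, hd, sub_mul, Finset.sum_sub_distrib]
  rw [Nat.card_congr (Equiv.subtypeEquivRight hpred)]
  have hdj_mem : d j ∈ φ.range := by
    refine ⟨Pi.single j 1, ?_⟩
    simp [φ, Pi.single_apply, mul_ite, Finset.sum_ite_eq']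
  -- card of range
  have hr_dvd : Nat.card φ.range ∣ n := by
    have := AddSubgroup.card_addSubgroup_dvd_card φ.range
    simpa [Nat.card_zmod] using this
  have hr_two : 2 ≤ Nat.card φ.range := by
    have : Nontrivial φ.range :=
      ⟨⟨⟨0, zero_mem _⟩, ⟨d j, hdj_mem⟩, by
        intro h
        exact hj (by simpa using (congrArg Subtype.val h).symm)⟩⟩
    have := Finite.one_lt_card_iff_nontrivial.mpr this
    omega
  have hp_le : n.minFac ≤ Nat.card φ.range := Nat.minFac_le_of_dvd hr_two hr_dvd
  have hp_pos : 0 < n.minFac := Nat.minFac_pos n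
  -- total card
  have htot : Nat.card (Fin k → ZMod n) = n ^ k := by
    simp [Nat.card_pi, Nat.card_zmod]
  -- card G = card quotient * card ker
  have hquot : Nat.card ((Fin k → ZMod n) ⧸ φ.ker) = Nat.card φ.range :=
    Nat.card_congr (QuotientAddGroup.quotientKerEquivRange φ).toEquiv
  have hG : n ^ k = Nat.card φ.range * Nat.card φ.ker := by
    rw [← htot, ← hquot]
    exact AddSubgroup.card_eq_card_quotient_mul_card_addSubgroup φ.ker
  have hker : Nat.card φ.ker = n ^ k / Nat.card φ.range := by
    rw [hG]
    rw [Nat.mul_div_cancel_left _ (by omega)]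
  -- fiber card ≤ ker card
  by_cases hne : ∃ x0, φ x0 = b
  · obtain ⟨x0, hx0⟩ := hne
    have hinj : Function.Injective
        (fun x : {x // φ x = b} => (⟨x.1 - x0, by
          rw [AddMonoidHom.mem_ker, map_sub, x.2, hx0, sub_self]⟩ : φ.ker)) := by
      intro x y h
      have : x.1 - x0 = y.1 - x0 := congrArg Subtype.val h
      exact Subtype.ext (by linear_combination (norm := abel) this)
    calc Nat.card {x // φ x = b} ≤ Nat.card φ.ker :=
          Nat.card_le_card_of_injective _ hinj
      _ = n ^ k / Nat.card φ.range := hker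
      _ ≤ n ^ k / n.minFac := Nat.div_le_div_left hp_le hp_pos
  · have : IsEmpty {x // φ x = b} := ⟨fun x => hne ⟨x.1, x.2⟩⟩
    simp [Nat.card_of_isEmpty]
end

section
/- (Tightness of the GMMH* bound.) Let $n > 1$ with smallest prime divisor $p$, and let $k \geq 1$. There exist two distinct messages $\mathbf{m}, \mathbf{m}' \in \mathbb{Z}_n^k$ and an element $b \in \mathbb{Z}_n$ such that the number of keys $\mathbf{x} \in \mathbb{Z}_n^k$ with $\sum_i m_i x_i - \sum_i m'_i x_i = b$ in $\mathbb{Z}_n$ is exactly $n^k / p$. -/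
theorem kernel_card_aux (n : ℕ) (hn : 1 < n) :
    Nat.card {y : ZMod n // ((n / n.minFac : ℕ) : ZMod n) * y = 0} = n / n.minFac := by
  have hp := Nat.minFac_prime (by omega : n ≠ 1)
  set p := n.minFac with hpdef
  have hpn : p ∣ n := Nat.minFac_dvd n
  have hppos : 0 < p := hp.pos
  have hq0 : 0 < n / p := Nat.div_pos (Nat.minFac_le (by omega)) hppos
  haveI : NeZero n := ⟨by omega⟩
  have hcond : ∀ y : ZMod n, ((n / p : ℕ) : ZMod n) * y = 0 ↔ p ∣ y.val := by
    intro y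
    conv_lhs => rw [← ZMod.natCast_rightInverse y]
    rw [← Nat.cast_mul, ZMod.natCast_eq_zero_iff]
    have key : ∀ v : ℕ, (n ∣ n / p * v) ↔ p ∣ v := by
      intro v
      nth_rewrite 1 [← Nat.div_mul_cancel hpn]
      exact mul_dvd_mul_iff_left (by omega : n / p ≠ 0)
    exact key _
  have e : {y : ZMod n // ((n / p : ℕ) : ZMod n) * y = 0} ≃ Fin (n / p) := by
    refine ⟨fun y => ⟨y.1.val / p, ?_⟩, fun j => ⟨((p * j.val : ℕ) : ZMod n), ?_⟩, ?_, ?_⟩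
    · exact Nat.div_lt_div_of_lt_of_dvd hpn y.1.val_lt
    · rw [hcond, ZMod.val_natCast, Nat.mod_eq_of_lt ((Nat.lt_div_iff_mul_lt' hpn _).mp j.2)]
      exact Dvd.intro _ rfl
    · rintro ⟨y, hy⟩
      rw [hcond] at hy
      apply Subtype.ext
      simp only
      rw [Nat.mul_div_cancel' hy, ZMod.natCast_rightInverse y]
    · rintro ⟨j, hj⟩
      apply Fin.ext
      simp only
      rw [ZMod.val_natCast, Nat.mod_eq_of_lt ((Nat.lt_div_iff_mul_lt' hpn _).mp hj),
        Nat.mul_div_cancel_left _ hppos]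
  rw [Nat.card_congr e, Nat.card_eq_fintype_card, Fintype.card_fin]

theorem stmt_9 (n : ℕ) (hn : 1 < n) (k : ℕ) (hk : 1 ≤ k) :
    ∃ (m m' : Fin k → ZMod n) (b : ZMod n), m ≠ m' ∧
      Nat.card {x : Fin k → ZMod n //
        (∑ i, m i * x i) - (∑ i, m' i * x i) = b} = n ^ k / n.minFac := by
  obtain ⟨k', rfl⟩ : ∃ k', k = k' + 1 := ⟨k - 1, by omega⟩
  have hp := Nat.minFac_prime (by omega : n ≠ 1)
  set p := n.minFac with hpdef
  have hpn : p ∣ n := Nat.minFac_dvd n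
  have hq0 : 0 < n / p := Nat.div_pos (Nat.minFac_le (by omega)) hp.pos
  have hqlt : n / p < n := Nat.div_lt_self (by omega) hp.one_lt
  haveI : NeZero n := ⟨by omega⟩
  set c : ZMod n := ((n / p : ℕ) : ZMod n) with hc
  have hcne : c ≠ 0 := by
    rw [hc, Ne, ZMod.natCast_eq_zero_iff]
    intro h
    have := Nat.le_of_dvd hq0 h
    omega
  refine ⟨Fin.cons c (fun _ => 0), 0, 0, ?_, ?_⟩
  · intro h
    apply hcne
    have := congrFun h 0
    simpa using this
  · have hsum : ∀ x : Fin (k' + 1) → ZMod n,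
        ((∑ i, (Fin.cons c (fun _ => 0) : Fin (k'+1) → ZMod n) i * x i) - (∑ i, (0 : Fin (k'+1) → ZMod n) i * x i)
          = (0 : ZMod n)) ↔ c * x 0 = 0 := by
      intro x
      rw [Fin.sum_univ_succ]
      simp [sub_eq_zero]
    have e1 : {x : Fin (k' + 1) → ZMod n //
        (∑ i, (Fin.cons c (fun _ => 0) : Fin (k'+1) → ZMod n) i * x i) - (∑ i, (0 : Fin (k'+1) → ZMod n) i * x i) = 0}
        ≃ {x : Fin (k' + 1) → ZMod n // c * x 0 = 0} :=
      Equiv.subtypeEquivRight hsum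
    have e2 : {x : Fin (k' + 1) → ZMod n // c * x 0 = 0}
        ≃ {y : ZMod n // c * y = 0} × (Fin k' → ZMod n) := by
      refine ⟨fun x => (⟨x.1 0, x.2⟩, Fin.tail x.1),
        fun yz => ⟨Fin.cons yz.1.1 yz.2, by simpa using yz.1.2⟩, ?_, ?_⟩
      · rintro ⟨x, hx⟩
        apply Subtype.ext
        exact Fin.cons_self_tail x
      · rintro ⟨⟨y, hy⟩, z⟩
        simp [Fin.tail_cons]
    rw [Nat.card_congr (e1.trans e2), Nat.card_prod, kernel_card_aux n hn,
      Nat.card_fun, Nat.card_eq_fintype_card (α := Fin k'), Fintype.card_fin,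
      Nat.card_zmod, pow_succ, Nat.mul_div_assoc _ hpn]
    ring
end
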